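/- Let q, a, b, c, d, x ∈ ℂ with 0 < |q| < 1 and x ≠ 0. Assume 1 - c q^j x ≠ 0 and 1 - d q^j x ≠ 0 for all j ≥ 0, and 1 - a q^j x ≠ 0 and 1 - b q^j x ≠ 0 for 0 ≤ j ≤ k - 1. Then the k-th iterate of the q-differential operator applied to t ↦ (a t;q)_∞ (b t;q)_∞ / ((c t;q)_∞ (d t;q)_∞), evaluated at x, equals ((a x;q)_∞ (b x;q)_∞/((c x;q)_∞ (d x;q)_∞)) · ∑_{i=0}^{k} [k choose i]_q q^{C(i,2)} ((c x;q)_i (d x;q)_i/(b x;q)_i) · ( ∑_{j=0}^{i} [i choose j]_q q^{j(j-i)} (-a)^j (-b)^{i-j} / (a x;q)_j ) · ( ∑_{l=0}^{k-i} [k-i choose l]_q (d q^i x;q)_l c^l d^{k-i-l} ). -/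

import Mathlib

open Finset

/-- The finite q-shifted factorial (a;q)_n = ∏_{j=0}^{n-1} (1 - a q^j). -/
noncomputable def qPoch (q a : ℂ) (n : ℕ) : ℂ :=
  ∏ j ∈ Finset.range n, (1 - a * q ^ j)

/-- The infinite q-shifted factorial (a;q)_∞ = ∏_{j=0}^{∞} (1 - a q^j). -/
noncomputable def qPochInf (q a : ℂ) : ℂ :=
  ∏' j : ℕ, (1 - a * q ^ j)

/-- The q-binomial coefficient [n choose k]_q = (q;q)_n / ((q;q)_k (q;q)_{n-k}). -/
noncomputable def qBinom (q : ℂ) (n k : ℕ) : ℂ :=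
  qPoch q q n / (qPoch q q k * qPoch q q (n - k))

/-- The q-differential operator: (D_q f)(x) = (f(x) - f(qx))/x. -/
noncomputable def Dq (q : ℂ) (f : ℂ → ℂ) : ℂ → ℂ :=
  fun x => (f x - f (q * x)) / x

/-! ### Infinite product basics -/

lemma qlogsum (q a : ℂ) (hq1 : ‖q‖ < 1) :
    Summable (fun j : ℕ => Complex.log (1 - a * q ^ j)) := by
  apply Summable.of_norm_bounded_eventually_nat
    (g := fun j => (3/2 * ‖a‖) * ‖q‖ ^ j)
  · exact (summable_geometric_of_lt_one (norm_nonneg _) hq1).mul_left _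
  · have ht : Filter.Tendsto (fun j : ℕ => ‖a‖ * ‖q‖ ^ j)
        Filter.atTop (nhds 0) := by
      simpa using (tendsto_pow_atTop_nhds_zero_of_norm_lt_one
        (by simpa using hq1)).const_mul (‖a‖)
    filter_upwards [ht.eventually (eventually_le_nhds (by norm_num : (0:ℝ) < 1/2))]
      with j hj
    have h2 : ‖-(a * q ^ j)‖ ≤ 1/2 := by
      simpa [norm_mul, norm_pow] using hj
    have := Complex.norm_log_one_add_half_le_self (z := -(a * q ^ j)) (by simpa using h2)
    simp only [sub_eq_add_neg] at *
    calc ‖Complex.log (1 + -(a * q ^ j))‖ ≤ 3/2 * ‖-(a * q ^ j)‖ := this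
      _ = 3/2 * ‖a‖ * ‖q‖ ^ j := by
          simp [norm_mul, norm_pow]; ring
      _ = _ := by ring

lemma qmult (q a : ℂ) (hq1 : ‖q‖ < 1) :
    Multipliable (fun j : ℕ => 1 - a * q ^ j) := by
  by_cases h : ∀ j : ℕ, 1 - a * q ^ j ≠ 0
  · exact Complex.multipliable_of_summable_log (qlogsum q a hq1)
  · push_neg at h
    obtain ⟨j0, hj0⟩ := h
    refine ⟨0, ?_⟩
    unfold HasProd
    apply Filter.Tendsto.congr' _ tendsto_const_nhds
    rw [Filter.EventuallyEq, SummationFilter.unconditional_filter, Filter.eventually_atTop]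
    exact ⟨{j0}, fun s hs => (Finset.prod_eq_zero (hs (Finset.mem_singleton_self j0)) hj0).symm⟩

lemma qne (q a : ℂ) (hq1 : ‖q‖ < 1) (h : ∀ j : ℕ, 1 - a * q ^ j ≠ 0) :
    qPochInf q a ≠ 0 := by
  have h2 := Complex.cexp_tsum_eq_tprod (f := fun j => 1 - a * q ^ j) h (qlogsum q a hq1)
  rw [qPochInf, ← h2]
  exact Complex.exp_ne_zero _

/-! ### Finite q-Pochhammer and q-binomial basics -/

lemma qPoch_zero (q a : ℂ) : qPoch q a 0 = 1 := by simp [qPoch]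

lemma qPoch_succ (q a : ℂ) (n : ℕ) :
    qPoch q a (n + 1) = qPoch q a n * (1 - a * q ^ n) := by
  simp [qPoch, Finset.prod_range_succ]

lemma qPoch_ne (q a : ℂ) (n : ℕ) (h : ∀ j : ℕ, j < n → 1 - a * q ^ j ≠ 0) :
    qPoch q a n ≠ 0 :=
  Finset.prod_ne_zero_iff.2 fun j hj => h j (Finset.mem_range.1 hj)

lemma one_sub_q_pow_ne (q : ℂ) (hq1 : ‖q‖ < 1) (n : ℕ) :
    (1 : ℂ) - q * q ^ n ≠ 0 := by
  intro h
  have h2 : q * q ^ n = 1 := by linear_combination -h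
  have := congrArg norm h2
  simp only [norm_mul, norm_pow, norm_one] at this
  have hle : ‖q‖ * ‖q‖ ^ n ≤ ‖q‖ * 1 := by
    apply mul_le_mul_of_nonneg_left _ (norm_nonneg _)
    exact pow_le_one₀ (norm_nonneg _) hq1.le
  rw [this] at hle
  simp at hle
  linarith

lemma qPoch_q_ne (q : ℂ) (hq1 : ‖q‖ < 1) (n : ℕ) : qPoch q q n ≠ 0 :=
  Finset.prod_ne_zero_iff.2 fun j _ => one_sub_q_pow_ne q hq1 j

lemma qBinom_zero (q : ℂ) (hq1 : ‖q‖ < 1) (n : ℕ) : qBinom q n 0 = 1 := by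
  simp [qBinom, qPoch_zero, div_self (qPoch_q_ne q hq1 n)]

lemma qBinom_self (q : ℂ) (hq1 : ‖q‖ < 1) (n : ℕ) : qBinom q n n = 1 := by
  simp [qBinom, qPoch_zero, div_self (qPoch_q_ne q hq1 n)]

lemma qPascal (q : ℂ) (hq1 : ‖q‖ < 1) {i n : ℕ} (h : i < n) :
    qBinom q (n + 1) (i + 1) = q ^ (i + 1) * qBinom q n (i + 1) + qBinom q n i := by
  obtain ⟨m, rfl⟩ : ∃ m, n = i + 1 + m := ⟨n - (i+1), by omega⟩
  have e1 : i + 1 + m - (i + 1) = m := by omega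
  have e2 : i + 1 + m - i = m + 1 := by omega
  have e3 : i + 1 + m + 1 - (i + 1) = m + 1 := by omega
  rw [qBinom, qBinom, qBinom, e1, e2, e3]
  rw [show i + 1 + m + 1 = (i + 1 + m) + 1 from rfl, qPoch_succ q q (i+1+m),
    qPoch_succ q q m, qPoch_succ q q i]
  have hi := qPoch_q_ne q hq1 i
  have hm := qPoch_q_ne q hq1 m
  have hn := qPoch_q_ne q hq1 (i + 1 + m)
  have h1 := one_sub_q_pow_ne q hq1 i
  have h2 := one_sub_q_pow_ne q hq1 m
  field_simp
  ring

/-! ### Splitting the infinite product -/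

lemma qPochInf_step (q u : ℂ) (hq1 : ‖q‖ < 1) :
    qPochInf q u = (1 - u) * qPochInf q (u * q) := by
  have hm : Multipliable (fun n : ℕ => 1 - u * q ^ (n + 1)) := by
    apply (qmult q (u * q) hq1).congr
    intro n; ring_nf
  have := tprod_eq_zero_mul' (f := fun j : ℕ => 1 - u * q ^ j) hm
  rw [qPochInf, this]
  simp only [pow_zero, mul_one]
  congr 1
  rw [qPochInf]
  apply tprod_congr
  intro n; ring_nf

lemma qPochInf_split (q u : ℂ) (hq1 : ‖q‖ < 1) (n : ℕ) :
    qPochInf q u = qPoch q u n * qPochInf q (u * q ^ n) := by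
  induction n with
  | zero => simp [qPoch]
  | succ n ih =>
    rw [ih, qPochInf_step q (u * q ^ n) hq1, qPoch_succ]
    rw [show u * q ^ n * q = u * q ^ (n + 1) by ring]
    ring

/-! ### q-derivatives of the elementary blocks -/

lemma DqA_iter (q a : ℂ) (hq0 : q ≠ 0) (hq1 : ‖q‖ < 1) :
    ∀ (k : ℕ) (x : ℂ), x ≠ 0 →
    (Dq q)^[k] (fun t => qPochInf q (a * t)) x
      = (-a) ^ k * q ^ k.choose 2 * qPochInf q (a * q ^ k * x) := by
  intro k
  induction k with
  | zero => intro x hx; simp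
  | succ k ih =>
    intro x hx
    rw [Function.iterate_succ_apply']
    show ((Dq q)^[k] _ x - (Dq q)^[k] _ (q * x)) / x = _
    rw [ih x hx, ih (q * x) (mul_ne_zero hq0 hx)]
    have h1 : qPochInf q (a * q ^ k * x)
        = (1 - a * q ^ k * x) * qPochInf q (a * q ^ (k+1) * x) := by
      rw [qPochInf_step q (a * q ^ k * x) hq1]
      rw [show a * q ^ k * x * q = a * q ^ (k+1) * x by ring]
    have h2 : qPochInf q (a * q ^ k * (q * x)) = qPochInf q (a * q ^ (k+1) * x) := by
      rw [show a * q ^ k * (q * x) = a * q ^ (k+1) * x by ring]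
    have hch : (k+1).choose 2 = k.choose 2 + k := by
      rw [Nat.choose_succ_succ, Nat.choose_one_right]; ring
    rw [h1, h2, hch, pow_add]
    field_simp
    ring

lemma DqC_iter (q c : ℂ) (hq0 : q ≠ 0) (hq1 : ‖q‖ < 1) :
    ∀ (k : ℕ) (x : ℂ), x ≠ 0 → (∀ j : ℕ, 1 - c * q ^ j * x ≠ 0) →
    (Dq q)^[k] (fun t => (qPochInf q (c * t))⁻¹) x
      = c ^ k * (qPochInf q (c * x))⁻¹ := by
  intro k
  induction k with
  | zero => intro x hx h; simp
  | succ k ih =>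
    intro x hx h
    have hq : ∀ j : ℕ, 1 - c * q ^ j * (q * x) ≠ 0 := by
      intro j
      have := h (j + 1)
      rw [show c * q ^ (j+1) * x = c * q ^ j * (q * x) by ring] at this
      exact this
    rw [Function.iterate_succ_apply']
    show ((Dq q)^[k] _ x - (Dq q)^[k] _ (q * x)) / x = _
    rw [ih x hx h, ih (q * x) (mul_ne_zero hq0 hx) hq]
    have hw : qPochInf q (c * x * q) ≠ 0 := by
      apply qne q _ hq1
      intro j
      have := h (j + 1)
      rw [show c * q ^ (j+1) * x = 1 * (c * x * q * q ^ j) by ring] at this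
      rw [show c * x * q * q ^ j = 1 * (c * x * q * q ^ j) by ring]
      exact this
    have h0 : 1 - c * x ≠ 0 := by
      have := h 0; rwa [pow_zero, mul_one] at this
    have h1 : qPochInf q (c * x) = (1 - c * x) * qPochInf q (c * x * q) :=
      qPochInf_step q (c * x) hq1
    have h2 : qPochInf q (c * (q * x)) = qPochInf q (c * x * q) := by
      rw [show c * (q * x) = c * x * q by ring]
    rw [h1, h2]
    field_simp
    ring

/-! ### The q-Leibniz rule -/

lemma qLeibniz (q : ℂ) (hq0 : q ≠ 0) (hq1 : ‖q‖ < 1) (f g F : ℂ → ℂ)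
    (hF : F = fun t => f t * g t) :
    ∀ (n : ℕ) (x : ℂ), x ≠ 0 →
    (Dq q)^[n] F x
      = ∑ i ∈ range (n + 1),
          qBinom q n i * (Dq q)^[i] f x * (Dq q)^[n - i] g (q ^ i * x) := by
  subst hF
  intro n
  induction n with
  | zero => intro x hx; simp [qBinom_zero q hq1 0]
  | succ n ih =>
    intro x hx
    have hqx : q * x ≠ 0 := mul_ne_zero hq0 hx
    rw [Function.iterate_succ_apply']
    show ((Dq q)^[n] (fun t => f t * g t) x - (Dq q)^[n] (fun t => f t * g t) (q * x)) / x
      = _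
    rw [ih x hx, ih (q * x) hqx]
    have key : ∀ i ∈ range (n + 1),
        qBinom q n i * (Dq q)^[i] f x * (Dq q)^[n - i] g (q ^ i * x)
          - qBinom q n i * (Dq q)^[i] f (q * x) * (Dq q)^[n - i] g (q ^ i * (q * x))
        = x * ((q ^ i * qBinom q n i) * (Dq q)^[i] f x
                * (Dq q)^[n - i + 1] g (q ^ i * x))
          + x * (qBinom q n i * (Dq q)^[i+1] f x
                * (Dq q)^[n - i] g (q ^ (i+1) * x)) := by
      intro i _
      have hqi : (q : ℂ) ^ i * x ≠ 0 := mul_ne_zero (pow_ne_zero i hq0) hx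
      have hG : (Dq q)^[n - i] g (q ^ i * x) - (Dq q)^[n - i] g (q ^ i * (q * x))
          = (q ^ i * x) * (Dq q)^[n - i + 1] g (q ^ i * x) := by
        rw [Function.iterate_succ_apply']
        show _ = (q ^ i * x) * (((Dq q)^[n-i] g (q ^ i * x)
          - (Dq q)^[n-i] g (q * (q ^ i * x))) / (q ^ i * x))
        rw [mul_div_cancel₀ _ hqi]
        ring_nf
      have hF : (Dq q)^[i] f x - (Dq q)^[i] f (q * x) = x * (Dq q)^[i + 1] f x := by
        rw [Function.iterate_succ_apply']
        show _ = x * (((Dq q)^[i] f x - (Dq q)^[i] f (q * x)) / x)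
        rw [mul_div_cancel₀ _ hx]
      have hGq : (Dq q)^[n - i] g (q ^ i * (q * x))
          = (Dq q)^[n - i] g (q ^ (i+1) * x) := by ring_nf
      calc qBinom q n i * (Dq q)^[i] f x * (Dq q)^[n - i] g (q ^ i * x)
            - qBinom q n i * (Dq q)^[i] f (q * x) * (Dq q)^[n - i] g (q ^ i * (q * x))
          = qBinom q n i * ((Dq q)^[i] f x
              * ((Dq q)^[n - i] g (q ^ i * x) - (Dq q)^[n - i] g (q ^ i * (q * x)))
            + ((Dq q)^[i] f x - (Dq q)^[i] f (q * x))
              * (Dq q)^[n - i] g (q ^ i * (q * x))) := by ring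
        _ = _ := by rw [hG, hF, hGq]; ring
    rw [← Finset.sum_sub_distrib, Finset.sum_congr rfl key, Finset.sum_add_distrib,
      ← Finset.mul_sum, ← Finset.mul_sum, ← mul_add]
    rw [mul_comm x _, mul_div_cancel_right₀ _ hx]
    have hsplit2 : ∑ i ∈ range (n + 1),
        qBinom q n i * (Dq q)^[i+1] f x * (Dq q)^[n - i] g (q ^ (i+1) * x)
      = (∑ i ∈ range n,
          qBinom q n i * (Dq q)^[i+1] f x * (Dq q)^[n - i] g (q ^ (i+1) * x))
        + qBinom q n n * (Dq q)^[n+1] f x * (Dq q)^[0] g (q ^ (n+1) * x) := by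
      rw [Finset.sum_range_succ]; simp
    have hsplit1 : ∑ i ∈ range (n + 1),
        (q ^ i * qBinom q n i) * (Dq q)^[i] f x * (Dq q)^[n - i + 1] g (q ^ i * x)
      = (q ^ 0 * qBinom q n 0) * (Dq q)^[0] f x * (Dq q)^[n - 0 + 1] g (q ^ 0 * x)
        + ∑ i ∈ range n,
          (q ^ (i+1) * qBinom q n (i+1)) * (Dq q)^[i+1] f x
            * (Dq q)^[n - (i+1) + 1] g (q ^ (i+1) * x) := by
      rw [Finset.sum_range_succ']; ring
    rw [hsplit1, hsplit2]
    rw [Finset.sum_range_succ' (fun i => qBinom q (n+1) i * (Dq q)^[i] f x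
      * (Dq q)^[n + 1 - i] g (q ^ i * x)) (n+1)]
    rw [Finset.sum_range_succ (fun i => qBinom q (n+1) (i+1) * (Dq q)^[i+1] f x
      * (Dq q)^[n + 1 - (i+1)] g (q ^ (i+1) * x)) n]
    rw [qBinom_zero q hq1 (n+1), qBinom_zero q hq1 n, qBinom_self q hq1 (n+1),
      qBinom_self q hq1 n]
    have hmid : ∀ i ∈ range n,
        qBinom q (n+1) (i+1) * (Dq q)^[i+1] f x * (Dq q)^[n + 1 - (i+1)] g (q ^ (i+1) * x)
        = (q ^ (i+1) * qBinom q n (i+1)) * (Dq q)^[i+1] f x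
            * (Dq q)^[n - (i+1) + 1] g (q ^ (i+1) * x)
          + qBinom q n i * (Dq q)^[i+1] f x * (Dq q)^[n - i] g (q ^ (i+1) * x) := by
      intro i hi
      rw [Finset.mem_range] at hi
      have e1 : n + 1 - (i + 1) = n - (i+1) + 1 := by omega
      have e2 : n + 1 - (i + 1) = n - i := by omega
      rw [qPascal q hq1 hi]
      rw [show (Dq q)^[n + 1 - (i+1)] g (q ^ (i+1) * x)
          = (Dq q)^[n - (i+1) + 1] g (q ^ (i+1) * x) by rw [e1]]
      rw [show (Dq q)^[n - (i+1) + 1] g (q ^ (i+1) * x)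
          = (Dq q)^[n - i] g (q ^ (i+1) * x) by rw [← e1, e2]]
      ring
    rw [Finset.sum_congr rfl hmid, Finset.sum_add_distrib]
    have e0 : n + 1 - 0 = n - 0 + 1 := by omega
    rw [e0]
    simp only [Nat.sub_self]
    ring

/-! ### Exponent bookkeeping -/

lemma ch2 (j m : ℕ) : (j + m).choose 2 = j.choose 2 + m.choose 2 + j * m := by
  induction m with
  | zero => simp
  | succ m ih =>
    have h1 : (j + m + 1).choose 2 = (j + m).choose 2 + (j + m) := by
      rw [Nat.choose_succ_succ, Nat.choose_one_right]; ring
    have h2 : (m + 1).choose 2 = m.choose 2 + m := by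
      rw [Nat.choose_succ_succ, Nat.choose_one_right]; ring
    rw [show j + (m + 1) = j + m + 1 by ring, h1, h2, ih]
    ring

lemma qexp (q : ℂ) (hq0 : q ≠ 0) {j i : ℕ} (h : j ≤ i) :
    q ^ j.choose 2 * q ^ (i - j).choose 2
      = q ^ i.choose 2 * q ^ ((j : ℤ) * ((j : ℤ) - (i : ℤ))) := by
  obtain ⟨m, rfl⟩ : ∃ m, i = j + m := ⟨i - j, by omega⟩
  have e1 : j + m - j = m := by omega
  have e2 : (j : ℤ) * ((j : ℤ) - ((j + m : ℕ) : ℤ)) = -(((j * m : ℕ) : ℤ)) := by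
    push_cast; ring
  rw [e1, e2, zpow_neg, zpow_natCast, ch2 j m, pow_add, pow_add]
  field_simp

/-! ### The numerator and denominator derivative formulas -/

lemma Dq_u (q a b x : ℂ) (hq0 : q ≠ 0) (hq1 : ‖q‖ < 1) (hx : x ≠ 0) (i : ℕ)
    (ha : ∀ j : ℕ, j < i → 1 - a * q ^ j * x ≠ 0)
    (hb : ∀ j : ℕ, j < i → 1 - b * q ^ j * x ≠ 0) :
    (Dq q)^[i] (fun t => qPochInf q (a * t) * qPochInf q (b * t)) x
      = qPochInf q (a * x) * qPochInf q (b * x) * q ^ i.choose 2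
          * (qPoch q (b * x) i)⁻¹ *
        ∑ j ∈ range (i + 1),
          qBinom q i j * q ^ ((j : ℤ) * ((j : ℤ) - (i : ℤ))) * (-a) ^ j * (-b) ^ (i - j)
            / qPoch q (a * x) j := by
  rw [qLeibniz q hq0 hq1 (fun t => qPochInf q (a * t)) (fun t => qPochInf q (b * t))
    _ rfl i x hx]
  rw [Finset.mul_sum]
  refine Finset.sum_congr rfl ?_
  intro j hj
  have hji : j ≤ i := by rw [Finset.mem_range] at hj; omega
  rw [DqA_iter q a hq0 hq1 j x hx,
    DqA_iter q b hq0 hq1 (i - j) (q ^ j * x) (mul_ne_zero (pow_ne_zero _ hq0) hx)]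
  have hbarg : b * q ^ (i - j) * (q ^ j * x) = b * q ^ i * x := by
    rw [show b * q ^ (i - j) * (q ^ j * x) = b * (q ^ (i - j) * q ^ j) * x by ring,
      ← pow_add, Nat.sub_add_cancel hji]
  rw [hbarg]
  have hAne : qPoch q (a * x) j ≠ 0 := by
    apply qPoch_ne
    intro l hl
    have := ha l (lt_of_lt_of_le hl hji)
    rwa [show a * q ^ l * x = a * x * q ^ l by ring] at this
  have hBne : qPoch q (b * x) i ≠ 0 := by
    apply qPoch_ne
    intro l hl
    have := hb l hl
    rwa [show b * q ^ l * x = b * x * q ^ l by ring] at this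
  have hPa : qPochInf q (a * q ^ j * x) = qPochInf q (a * x) / qPoch q (a * x) j := by
    have hs := qPochInf_split q (a * x) hq1 j
    rw [show a * x * q ^ j = a * q ^ j * x by ring] at hs
    rw [hs, mul_div_cancel_left₀ _ hAne]
  have hPb : qPochInf q (b * q ^ i * x) = qPochInf q (b * x) / qPoch q (b * x) i := by
    have hs := qPochInf_split q (b * x) hq1 i
    rw [show b * x * q ^ i = b * q ^ i * x by ring] at hs
    rw [hs, mul_div_cancel_left₀ _ hBne]
  rw [hPa, hPb]
  have hE := qexp q hq0 hji
  linear_combination (qBinom q i j * (-a) ^ j * (-b) ^ (i - j) * qPochInf q (a * x)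
    * qPochInf q (b * x) / (qPoch q (a * x) j * qPoch q (b * x) i)) * hE

lemma Dq_v (q c d x : ℂ) (hq0 : q ≠ 0) (hq1 : ‖q‖ < 1) (hx : x ≠ 0) (i m : ℕ)
    (hc : ∀ j : ℕ, 1 - c * q ^ j * x ≠ 0)
    (hd : ∀ j : ℕ, 1 - d * q ^ j * x ≠ 0) :
    (Dq q)^[m] (fun t => (qPochInf q (c * t))⁻¹ * (qPochInf q (d * t))⁻¹) (q ^ i * x)
      = qPoch q (c * x) i * qPoch q (d * x) i
          * (qPochInf q (c * x))⁻¹ * (qPochInf q (d * x))⁻¹ *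
        ∑ l ∈ range (m + 1),
          qBinom q m l * qPoch q (d * q ^ i * x) l * c ^ l * d ^ (m - l) := by
  have hs : q ^ i * x ≠ 0 := mul_ne_zero (pow_ne_zero _ hq0) hx
  rw [qLeibniz q hq0 hq1 (fun t => (qPochInf q (c * t))⁻¹)
    (fun t => (qPochInf q (d * t))⁻¹) _ rfl m (q ^ i * x) hs]
  rw [Finset.mul_sum]
  have hCi : qPoch q (c * x) i ≠ 0 := by
    apply qPoch_ne; intro l _
    have := hc l; rwa [show c * q ^ l * x = c * x * q ^ l by ring] at this
  have hDi : qPoch q (d * x) i ≠ 0 := by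
    apply qPoch_ne; intro l _
    have := hd l; rwa [show d * q ^ l * x = d * x * q ^ l by ring] at this
  have hc1 : qPochInf q (c * (q ^ i * x)) = qPochInf q (c * x) / qPoch q (c * x) i := by
    have hsplit := qPochInf_split q (c * x) hq1 i
    rw [show c * x * q ^ i = c * (q ^ i * x) by ring] at hsplit
    rw [hsplit, mul_div_cancel_left₀ _ hCi]
  have hd2 : qPochInf q (d * q ^ i * x) = qPochInf q (d * x) / qPoch q (d * x) i := by
    have hsplit := qPochInf_split q (d * x) hq1 i
    rw [show d * x * q ^ i = d * q ^ i * x by ring] at hsplit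
    rw [hsplit, mul_div_cancel_left₀ _ hDi]
  refine Finset.sum_congr rfl ?_
  intro l hl
  have hcs : ∀ j : ℕ, 1 - c * q ^ j * (q ^ i * x) ≠ 0 := by
    intro j
    have := hc (j + i)
    rwa [show c * q ^ (j + i) * x = c * q ^ j * (q ^ i * x) by rw [pow_add]; ring] at this
  have hds : ∀ j : ℕ, 1 - d * q ^ j * (q ^ l * (q ^ i * x)) ≠ 0 := by
    intro j
    have := hd (j + l + i)
    rwa [show d * q ^ (j + l + i) * x = d * q ^ j * (q ^ l * (q ^ i * x)) by
      rw [pow_add, pow_add]; ring] at this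
  rw [DqC_iter q c hq0 hq1 l (q ^ i * x) hs hcs,
    DqC_iter q d hq0 hq1 (m - l) (q ^ l * (q ^ i * x))
      (mul_ne_zero (pow_ne_zero _ hq0) hs) hds]
  have hDl : qPoch q (d * q ^ i * x) l ≠ 0 := by
    apply qPoch_ne; intro r _
    have := hd (i + r)
    rwa [show d * q ^ (i + r) * x = d * q ^ i * x * q ^ r by rw [pow_add]; ring] at this
  have hd1 : qPochInf q (d * (q ^ l * (q ^ i * x)))
      = qPochInf q (d * q ^ i * x) / qPoch q (d * q ^ i * x) l := by
    have hsplit := qPochInf_split q (d * q ^ i * x) hq1 l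
    rw [show d * q ^ i * x * q ^ l = d * (q ^ l * (q ^ i * x)) by ring] at hsplit
    rw [hsplit, mul_div_cancel_left₀ _ hDl]
  rw [hc1, hd1, hd2]
  field_simp

theorem stmt6 (q a b c d x : ℂ) (hq0 : 0 < ‖q‖) (hq1 : ‖q‖ < 1)
    (hx : x ≠ 0) (k : ℕ)
    (hc : ∀ j : ℕ, 1 - c * q ^ j * x ≠ 0)
    (hd : ∀ j : ℕ, 1 - d * q ^ j * x ≠ 0)
    (ha : ∀ j : ℕ, j < k → 1 - a * q ^ j * x ≠ 0)
    (hb : ∀ j : ℕ, j < k → 1 - b * q ^ j * x ≠ 0) :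
    (Dq q)^[k]
        (fun t => qPochInf q (a * t) * qPochInf q (b * t) /
          (qPochInf q (c * t) * qPochInf q (d * t))) x =
      qPochInf q (a * x) * qPochInf q (b * x) /
          (qPochInf q (c * x) * qPochInf q (d * x)) *
        ∑ i ∈ Finset.range (k + 1),
          qBinom q k i * q ^ (i.choose 2) *
            (qPoch q (c * x) i * qPoch q (d * x) i / qPoch q (b * x) i) *
            (∑ j ∈ Finset.range (i + 1),
              qBinom q i j * q ^ ((j : ℤ) * ((j : ℤ) - (i : ℤ))) * (-a) ^ j * (-b) ^ (i - j) /
                qPoch q (a * x) j) *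
            ∑ l ∈ Finset.range (k - i + 1),
              qBinom q (k - i) l * qPoch q (d * q ^ i * x) l * c ^ l * d ^ (k - i - l) := by
  have hq : q ≠ 0 := by
    intro h; rw [h] at hq0; simp at hq0
  rw [qLeibniz q hq hq1 (fun t => qPochInf q (a * t) * qPochInf q (b * t))
    (fun t => (qPochInf q (c * t))⁻¹ * (qPochInf q (d * t))⁻¹)
    _ (by funext t; rw [div_eq_mul_inv, mul_inv]) k x hx]
  rw [Finset.mul_sum]
  refine Finset.sum_congr rfl ?_
  intro i hi
  have hik : i ≤ k := by rw [Finset.mem_range] at hi; omega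
  rw [Dq_u q a b x hq hq1 hx i (fun j hj => ha j (lt_of_lt_of_le hj hik))
    (fun j hj => hb j (lt_of_lt_of_le hj hik))]
  rw [Dq_v q c d x hq hq1 hx i (k - i) hc hd]
  rw [div_eq_mul_inv (qPochInf q (a * x) * qPochInf q (b * x)), mul_inv]
  ring
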